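/- For every n ≥ 2 there exists ℓ such that the cyclic Kautz digraph CK(d,ℓ) has girth greater than n; concretely, taking ℓ = lcm(2,3,…,n) + 1 ensures that CK(d,ℓ) contains no directed cycle of length at most n. -/
import Mathlib


/-- Consecutive entries are distinct. -/
abbrev consecNe {m n : ℕ} (x : Fin m → Fin n) : Prop :=
  ∀ i j : Fin m, j.val = i.val + 1 → x i ≠ x j

/-- First entry distinct from last entry. -/
abbrev firstNeLast {m n : ℕ} (x : Fin m → Fin n) : Prop :=
  ∀ i j : Fin m, i.val = 0 → j.val = m - 1 → x i ≠ x j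

/-- Vertex of the cyclic Kautz digraph. -/
abbrev ckVert {m n : ℕ} (x : Fin m → Fin n) : Prop := consecNe x ∧ firstNeLast x

/-- Arc of the cyclic Kautz digraph: `y` is the left shift of `x` with a new last
symbol distinct from `x₂` and `x_ℓ`. -/
abbrev ckAdj {m n : ℕ} (x y : Fin m → Fin n) : Prop :=
  (∀ i j : Fin m, j.val = i.val + 1 → y i = x j) ∧
  (∀ i j : Fin m, i.val = m - 1 → j.val = 1 → y i ≠ x j) ∧
  (∀ i : Fin m, i.val = m - 1 → y i ≠ x i)

/-- A walk of length `k` in `CK(d,ℓ)` from `u` to `v`: a sequence of `k+1` vertices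
starting at `u`, ending at `v`, with consecutive vertices adjacent. -/
abbrev ckWalk {m n : ℕ} (k : ℕ) (u v : Fin m → Fin n) : Prop :=
  ∃ w : Fin (k + 1) → Fin m → Fin n, w 0 = u ∧ w (Fin.last k) = v ∧
    (∀ i, ckVert (w i)) ∧ ∀ i j : Fin (k + 1), j.val = i.val + 1 → ckAdj (w i) (w j)

/-- For every `n ≥ 2`, taking `ℓ = lcm(2,3,…,n) + 1` the cyclic Kautz digraph
`CK(d,ℓ)` contains no directed cycle of length at most `n`; hence there are cyclic
Kautz digraphs of arbitrarily large girth. -/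

lemma ck_aux {d L g : ℕ} (hdvd : g ∣ L) (x : Fin (L + 1) → Fin (d + 1))
    (hfl : firstNeLast x) (hwalk : ckWalk g x x) : False := by
  obtain ⟨w, hw0, hwl, hvert, hadj⟩ := hwalk
  have key : ∀ t : ℕ, ∀ ht : t ≤ g, ∀ i : ℕ, ∀ hi : i + t ≤ L,
      w ⟨t, by omega⟩ ⟨i, by omega⟩ = x ⟨i + t, by omega⟩ := by
    intro t
    induction t with
    | zero =>
      intro _ i hi
      have h0 : (⟨0, by omega⟩ : Fin (g + 1)) = 0 := rfl
      rw [h0, hw0]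
      exact congrArg x (Fin.ext (by simp only [Fin.val_mk]; omega))
    | succ t ih =>
      intro ht i hi
      have h1 := (hadj ⟨t, by omega⟩ ⟨t + 1, by omega⟩ rfl).1
        ⟨i, by omega⟩ ⟨i + 1, by omega⟩ rfl
      rw [h1, ih (by omega) (i + 1) (by omega)]
      exact congrArg x (Fin.ext (by simp only [Fin.val_mk]; omega))
  have per : ∀ i : ℕ, ∀ hi : i + g ≤ L,
      x ⟨i, by omega⟩ = x ⟨i + g, by omega⟩ := by
    intro i hi
    have h := key g le_rfl i hi
    rwa [show (⟨g, by omega⟩ : Fin (g + 1)) = Fin.last g from rfl, hwl] at h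
  have mult : ∀ k : ℕ, ∀ hk : k * g ≤ L,
      x ⟨0, by omega⟩ = x ⟨k * g, by omega⟩ := by
    intro k
    induction k with
    | zero => intro _; congr 1; apply Fin.ext; simp
    | succ k ih =>
      intro hk
      have hle : k * g ≤ L := le_trans (Nat.mul_le_mul_right g (Nat.le_succ k)) hk
      have e : (k + 1) * g = k * g + g := by ring
      rw [ih hle, per (k * g) (by omega)]
      congr 1
      apply Fin.ext
      simpa using e.symm
  obtain ⟨c, hc⟩ := hdvd
  have hx : x ⟨0, by omega⟩ = x ⟨L, by omega⟩ := by
    have h := mult c (by rw [hc]; exact Nat.le_of_eq (Nat.mul_comm c g))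
    rw [h]
    congr 1
    apply Fin.ext
    simp [hc, Nat.mul_comm]
  exact hfl ⟨0, by omega⟩ ⟨L, by omega⟩ rfl rfl hx

theorem stmt13 (d n : ℕ) (hn : 2 ≤ n) :
    ∀ g, 1 ≤ g → g ≤ n →
      ¬ ∃ x : Fin ((Finset.Icc 2 n).lcm id + 1) → Fin (d + 1),
          ckVert x ∧ ckWalk g x x := by
  intro g hg1 hgn
  rintro ⟨x, ⟨hcons, hfl⟩, hwalk⟩
  have gdvd : g ∣ (Finset.Icc 2 n).lcm id := by
    rcases eq_or_lt_of_le hg1 with h | h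
    · rw [← h]; exact one_dvd _
    · exact Finset.dvd_lcm (by simp [Finset.mem_Icc]; omega)
  exact ck_aux gdvd x hfl hwalk
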